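/- arXiv:2509.15916 — 2 statements merged into one kernel-verified Lean document; each statement's English description precedes it below -/
import Mathlib

section
/- For all integers n ≥ 1 and m ≥ 2, ∫₀¹ Bₙ(x)·Sₘ(x) dx = −sin(πn/2) · n! · ζ(n+m) / (2π)^n. In particular the integral vanishes for even n, and for odd n it equals (−1)^{(n+1)/2} · n! · ζ(n+m) / (2π)^n; when moreover m is even, this exhibits an odd zeta value ζ(n+m) as a Bernoulli–Clausen cross integral. (This is the cross case of the paper's orthogonality lemma producing odd zeta values.) -/
open Real MeasureTheory

/-- The real Bernoulli polynomial `Bₙ(x)`. -/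
noncomputable def bernoulliPoly (n : ℕ) (x : ℝ) : ℝ :=
  Polynomial.aeval x (Polynomial.bernoulli n)

/-- The sine Clausen-type series `S_m(x) = ∑_{k=1}^∞ sin(2πkx)/k^m`. -/
noncomputable def clausenS (m : ℕ) (x : ℝ) : ℝ :=
  ∑' k : ℕ+, Real.sin (2 * Real.pi * k * x) / (k : ℝ) ^ m

lemma I_pow_eq (n : ℕ) : Complex.I ^ n =
    ((Real.cos (π * n / 2) : ℝ) : ℂ) + ((Real.sin (π * n / 2) : ℝ) : ℂ) * Complex.I := by
  have h2 : Complex.exp (((π / 2 : ℝ) : ℂ) * Complex.I) = Complex.I := by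
    rw [Complex.exp_mul_I]
    push_cast [Complex.ofReal_cos, Complex.ofReal_sin]
    simp
  have h3 : Complex.exp (((π * n / 2 : ℝ) : ℂ) * Complex.I) = Complex.I ^ n := by
    rw [show (((π * n / 2 : ℝ) : ℂ) * Complex.I) = n * (((π / 2 : ℝ) : ℂ) * Complex.I) by
      push_cast; ring, Complex.exp_nat_mul, h2]
  rw [← h3, Complex.exp_mul_I]
  push_cast [Complex.ofReal_cos, Complex.ofReal_sin]
  ring

lemma bernoulliPoly_eq (n : ℕ) (x : ℝ) : bernoulliPoly n x = bernoulliFun n x := by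
  rw [bernoulliPoly, bernoulliFun, Polynomial.aeval_def, Polynomial.eval_map]

lemma bernoulliPoly_continuous (n : ℕ) : Continuous (bernoulliPoly n) := by
  have : bernoulliPoly n = fun x : ℝ =>
      (Polynomial.map (algebraMap ℚ ℝ) (Polynomial.bernoulli n)).eval x := by
    funext x; rw [bernoulliPoly, Polynomial.aeval_def, Polynomial.eval_map]
  rw [this]
  exact Polynomial.continuous _

lemma term_integral (n : ℕ) (hn : n ≠ 0) (j : ℕ+) :
    ∫ x in (0:ℝ)..1, bernoulliPoly n x * Real.sin (2 * π * j * x) =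
      -(Real.sin (π * n / 2) * n.factorial) / (2 * π * j) ^ n := by
  have h1 := bernoulliFourierCoeff_eq hn (-(j : ℤ))
  rw [bernoulliFourierCoeff, fourierCoeffOn_eq_integral] at h1
  simp only [neg_neg, sub_zero, one_smul, smul_eq_mul, fourier_coe_apply, div_one, one_div] at h1
  push_cast at h1
  have hint : Set.EqOn (fun x : ℝ => Complex.exp (2 * π * Complex.I * (j:ℂ) * x / 1) *
      (bernoulliFun n x : ℂ))
      (fun x : ℝ => ((bernoulliPoly n x * Real.cos (2 * π * j * x) : ℝ) : ℂ)
        + ((bernoulliPoly n x * Real.sin (2 * π * j * x) : ℝ) : ℂ) * Complex.I)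
      (Set.uIcc 0 1) := by
    intro x _
    simp only
    rw [show ((2:ℂ) * π * Complex.I * (j:ℂ) * x / 1) = ((2*π*j*x : ℝ):ℂ) * Complex.I by
      push_cast; ring, Complex.exp_mul_I]
    push_cast [Complex.ofReal_cos, Complex.ofReal_sin, bernoulliPoly_eq]
    ring
  rw [intervalIntegral.integral_congr hint] at h1
  have hcont1 : Continuous fun x : ℝ => bernoulliPoly n x * Real.cos (2 * π * j * x) :=
    (bernoulliPoly_continuous n).mul (by continuity)
  have hcont2 : Continuous fun x : ℝ => bernoulliPoly n x * Real.sin (2 * π * j * x) :=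
    (bernoulliPoly_continuous n).mul (by continuity)
  have hi1 : IntervalIntegrable (fun x : ℝ =>
      ((bernoulliPoly n x * Real.cos (2 * π * j * x) : ℝ) : ℂ)) volume 0 1 :=
    (Complex.continuous_ofReal.comp hcont1).intervalIntegrable 0 1
  have hi2 : IntervalIntegrable (fun x : ℝ =>
      ((bernoulliPoly n x * Real.sin (2 * π * j * x) : ℝ) : ℂ) * Complex.I) volume 0 1 :=
    ((Complex.continuous_ofReal.comp hcont2).mul continuous_const).intervalIntegrable 0 1
  rw [intervalIntegral.integral_add hi1 hi2,
    intervalIntegral.integral_mul_const, intervalIntegral.integral_ofReal,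
    intervalIntegral.integral_ofReal] at h1
  have hrpos : (0:ℝ) < 2 * π * j := by positivity
  have hr : ((2:ℝ) * π * j : ℝ) ≠ 0 := ne_of_gt hrpos
  have hne : ((2 * π * j : ℝ) : ℂ) ^ n ≠ 0 := pow_ne_zero _ (by exact_mod_cast hr)
  have hrhs : -(n.factorial : ℂ) / (2 * π * Complex.I * (-(j:ℂ))) ^ n =
      ((-(Real.cos (π * n / 2) * n.factorial) / (2 * π * j) ^ n : ℝ) : ℂ)
        + ((-(Real.sin (π * n / 2) * n.factorial) / (2 * π * j) ^ n : ℝ) : ℂ) * Complex.I := by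
    have hbase : ((2:ℂ) * π * Complex.I * (-(j:ℂ))) = ((2 * π * j : ℝ) : ℂ) * (-Complex.I) := by
      push_cast; ring
    have hinv : (-Complex.I) ^ n = (Complex.I ^ n)⁻¹ := by
      rw [← inv_pow, Complex.inv_I]
    have hIne : Complex.I ^ n ≠ 0 := pow_ne_zero _ Complex.I_ne_zero
    have key : -(n.factorial:ℂ) / (((2 * π * j : ℝ) : ℂ) ^ n * (-Complex.I) ^ n)
        = -(n.factorial:ℂ) * Complex.I ^ n / ((2 * π * j : ℝ) : ℂ) ^ n := by
      rw [hinv]; field_simp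
    rw [hbase, mul_pow, key, I_pow_eq]
    push_cast
    ring
  rw [hrhs] at h1
  have h2 := congrArg Complex.im h1
  simp only [Complex.add_im, Complex.mul_im, Complex.ofReal_im, Complex.ofReal_re,
    Complex.I_im, Complex.I_re, mul_zero, zero_mul, mul_one, zero_add, add_zero] at h2
  exact h2

/-- Cross case of the orthogonality lemma: for `n ≥ 1`, `m ≥ 2`,
`∫₀¹ Bₙ(x)·Sₘ(x) dx = −sin(πn/2)·n!·ζ(n+m)/(2π)^n`. -/
theorem bernoulli_clausenS_cross (n m : ℕ) (hn : 1 ≤ n) (hm : 2 ≤ m) :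
    ((∫ x in (0:ℝ)..1, bernoulliPoly n x * clausenS m x : ℝ) : ℂ) =
      -(Real.sin (Real.pi * n / 2) : ℂ) * (n.factorial : ℂ) *
        riemannZeta (n + m) / (2 * Real.pi : ℂ) ^ n := by
  have hn0 : n ≠ 0 := by omega
  -- bound for the Bernoulli polynomial on [0,1]
  obtain ⟨C, hC⟩ := (isCompact_Icc (a := (0:ℝ)) (b := 1)).exists_bound_of_continuousOn
    (bernoulliPoly_continuous n).continuousOn
  -- summability facts
  have hsumm : Summable (fun j : ℕ+ => (1:ℝ) / (j:ℝ) ^ m) := by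
    have h : Summable (fun k : ℕ => (1:ℝ)/(k:ℝ) ^ m) := by
      simpa using Real.summable_one_div_nat_pow.mpr (by omega : 1 < m)
    exact h.comp_injective PNat.coe_injective
  have hsumnm : Summable (fun j : ℕ+ => (1:ℝ) / (j:ℝ) ^ (n + m)) := by
    have h : Summable (fun k : ℕ => (1:ℝ)/(k:ℝ) ^ (n + m)) := by
      simpa using Real.summable_one_div_nat_pow.mpr (by omega : 1 < n + m)
    exact h.comp_injective PNat.coe_injective
  have hsinb : ∀ (j : ℕ+) (x : ℝ), |Real.sin (2 * π * j * x) / (j:ℝ) ^ m| ≤ 1 / (j:ℝ) ^ m := by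
    intro j x
    rw [abs_div, abs_of_nonneg (by positivity : (0:ℝ) ≤ (j:ℝ) ^ m)]
    gcongr
    exact Real.abs_sin_le_one _
  have hS : ∀ x : ℝ, HasSum (fun j : ℕ+ => Real.sin (2 * π * j * x) / (j:ℝ) ^ m)
      (clausenS m x) := by
    intro x
    refine Summable.hasSum ?_
    refine Summable.of_norm_bounded hsumm (fun j => ?_)
    rw [Real.norm_eq_abs]
    exact hsinb j x
  -- the interchange of sum and integral
  set μ : Measure ℝ := volume.restrict (Set.Ioc (0:ℝ) 1) with hμ
  have key : HasSum
      (fun j : ℕ+ => ∫ x, bernoulliPoly n x * (Real.sin (2 * π * j * x) / (j:ℝ) ^ m) ∂μ)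
      (∫ x, bernoulliPoly n x * clausenS m x ∂μ) := by
    refine hasSum_integral_of_dominated_convergence
      (fun j _ => C * ((1:ℝ) / (j:ℝ) ^ m)) (fun j => ?_) (fun j => ?_) ?_ ?_ ?_
    · exact ((bernoulliPoly_continuous n).mul ((by continuity : Continuous fun x : ℝ =>
        Real.sin (2 * π * j * x)).div_const _)).aestronglyMeasurable
    · refine Filter.eventually_of_mem (self_mem_ae_restrict measurableSet_Ioc) (fun x hx => ?_)
      have hB : |bernoulliPoly n x| ≤ C := by
        simpa using hC x (Set.Ioc_subset_Icc_self hx)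
      have hs : |Real.sin (2 * π * j * x) / (j:ℝ) ^ m| ≤ 1 / (j:ℝ) ^ m := hsinb j x
      calc ‖bernoulliPoly n x * (Real.sin (2 * π * j * x) / (j:ℝ) ^ m)‖
          = |bernoulliPoly n x| * |Real.sin (2 * π * j * x) / (j:ℝ) ^ m| := by
            rw [Real.norm_eq_abs, abs_mul]
        _ ≤ C * (1 / (j:ℝ) ^ m) := by
            apply mul_le_mul hB hs (abs_nonneg _) ((abs_nonneg _).trans hB)
    · exact Filter.Eventually.of_forall (fun _ => hsumm.mul_left C)
    · exact integrable_const _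
    · exact Filter.Eventually.of_forall (fun x => (hS x).mul_left _)
  -- value of each term
  have hterm : ∀ j : ℕ+, (∫ x, bernoulliPoly n x * (Real.sin (2 * π * j * x) / (j:ℝ) ^ m) ∂μ)
      = (-(Real.sin (π * n / 2) * n.factorial) / (2 * π) ^ n) * (1 / (j:ℝ) ^ (n + m)) := by
    intro j
    have h0 : (∫ x, bernoulliPoly n x * (Real.sin (2 * π * j * x) / (j:ℝ) ^ m) ∂μ)
        = (∫ x in (0:ℝ)..1, bernoulliPoly n x * Real.sin (2 * π * j * x)) / (j:ℝ) ^ m := by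
      rw [← intervalIntegral.integral_div, hμ, intervalIntegral.integral_of_le zero_le_one]
      exact integral_congr_ae (Filter.Eventually.of_forall (fun x => (mul_div_assoc _ _ _).symm))
    rw [h0, term_integral n hn0 j]
    have hj : ((j:ℝ)) ≠ 0 := by positivity
    have hπ : (π:ℝ) ≠ 0 := Real.pi_ne_zero
    rw [mul_pow, mul_pow, pow_add]
    field_simp
    try ring_nf
    try tauto
  simp_rw [hterm] at key
  have hsum2 : HasSum (fun j : ℕ+ =>
      (-(Real.sin (π * n / 2) * n.factorial) / (2 * π) ^ n) * (1 / (j:ℝ) ^ (n + m)))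
      ((-(Real.sin (π * n / 2) * n.factorial) / (2 * π) ^ n) *
        ∑' j : ℕ+, 1 / (j:ℝ) ^ (n + m)) := hsumnm.hasSum.mul_left _
  have hint_eq : (∫ x, bernoulliPoly n x * clausenS m x ∂μ)
      = (-(Real.sin (π * n / 2) * n.factorial) / (2 * π) ^ n) *
        ∑' j : ℕ+, 1 / (j:ℝ) ^ (n + m) := (key.unique hsum2)
  -- identify the zeta value
  have hpnat : ∑' j : ℕ+, (1:ℝ) / (j:ℝ) ^ (n + m) = ∑' k : ℕ, (1:ℝ) / (k:ℝ) ^ (n + m) := by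
    refine Function.Injective.tsum_eq (f := fun k : ℕ => (1:ℝ)/(k:ℝ) ^ (n + m))
      PNat.coe_injective ?_
    intro k hk
    simp only [Function.mem_support] at hk
    have hk0 : k ≠ 0 := by
      rintro rfl
      simp at hk
      omega
    exact ⟨⟨k, Nat.pos_of_ne_zero hk0⟩, rfl⟩
  have hzeta : riemannZeta (n + m) =
      ((∑' j : ℕ+, (1:ℝ) / (j:ℝ) ^ (n + m) : ℝ) : ℂ) := by
    rw [hpnat, show ((n:ℂ) + (m:ℂ)) = (((n + m : ℕ) : ℕ):ℂ) by push_cast; ring,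
      zeta_nat_eq_tsum_of_gt_one (by omega : 1 < n + m), Complex.ofReal_tsum]
    congr 1
    funext k
    push_cast
    ring
  -- wrap up
  have hLHS : (∫ x in (0:ℝ)..1, bernoulliPoly n x * clausenS m x)
      = ∫ x, bernoulliPoly n x * clausenS m x ∂μ := by
    rw [hμ, intervalIntegral.integral_of_le zero_le_one]
  rw [hLHS, hint_eq, hzeta]
  have h2π : ((2:ℂ) * (π:ℝ)) ^ n ≠ 0 := pow_ne_zero _ (by
    simp [Real.pi_ne_zero, Complex.ofReal_ne_zero])
  push_cast
  field_simp
  try ring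
end

section
/- Generating function of the Hermite polynomials: for all real x and t, the series ∑_{n=0}^∞ Heₙ(x)·tⁿ/n! converges (HasSum) to exp(x·t − t²/2), where Heₙ is the n-th probabilists' Hermite polynomial. (This is the generating-function identity used in the paper's 'Generating Function Alignment' step; the paper states the physicists' version e^{−t²+2xt} = ∑ Hₘ(x)tᵐ/m!, which is equivalent under the standard rescaling Hₘ(x) = 2^{m/2}·He_m(√2·x).) -/
open Real

open scoped Nat

private lemma nat_key (j k : ℕ) :
    (2 * j - 1)‼ * 2 ^ j * j ! * (Nat.choose (2 * j + k) k * k !) = (2 * j + k)! := by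
  have h1 : (2 * j)! = (2 * j - 1)‼ * 2 ^ j * j ! := by
    cases j with
    | zero => simp
    | succ m =>
      have : 2 * (m + 1) = (2 * m + 1) + 1 := by ring
      rw [this, Nat.factorial_eq_mul_doubleFactorial]
      have h2 : (2 * m + 1 + 1) = 2 * (m + 1) := by ring
      rw [h2, Nat.doubleFactorial_two_mul]
      have h3 : (2 * (m + 1) - 1) = 2 * m + 1 := by omega
      rw [h3]; ring
  have h4 : Nat.choose (2 * j + k) k * k ! * (2 * j + k - k)! = (2 * j + k)! :=
    Nat.choose_mul_factorial_mul_factorial (Nat.le_add_left k (2 * j))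
  have h5 : 2 * j + k - k = 2 * j := by omega
  rw [h5] at h4
  rw [← h4, h1]; ring

private lemma term_key (x t : ℝ) (j k : ℕ) :
    (((-1 : ℤ) ^ j * (2 * j - 1)‼ * Nat.choose (2 * j + k) k : ℤ) : ℝ) * x ^ k
        * t ^ (2 * j + k) / (2 * j + k)! =
      (x * t) ^ k / k ! * ((-(t ^ 2) / 2) ^ j / j !) := by
  have hnat : ((2 * j - 1)‼ * 2 ^ j * j ! * (Nat.choose (2 * j + k) k * k !) : ℝ)
      = ((2 * j + k)! : ℝ) := by exact_mod_cast congrArg Nat.cast (nat_key j k)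
  have hneg : (-(t ^ 2) / 2 : ℝ) ^ j = (-1) ^ j * t ^ (2 * j) / 2 ^ j := by
    rw [div_pow, neg_pow, ← pow_mul]
  rw [hneg]
  push_cast
  have hk : (k ! : ℝ) ≠ 0 := by positivity
  have hj : (j ! : ℝ) ≠ 0 := by positivity
  have hjk : ((2 * j + k)! : ℝ) ≠ 0 := by positivity
  have h2 : (2 : ℝ) ^ j ≠ 0 := by positivity
  field_simp
  linear_combination (x ^ k * t ^ (2 * j + k)) * hnat

/-- Generating function of the probabilists' Hermite polynomials:
`∑_{n=0}^∞ Heₙ(x)·tⁿ/n! = exp(x·t − t²/2)`. -/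
theorem hermite_generating_function (x t : ℝ) :
    HasSum (fun n : ℕ => (Polynomial.aeval x (Polynomial.hermite n) : ℝ) * t ^ n / n.factorial)
      (Real.exp (x * t - t ^ 2 / 2)) := by
  set f : ℕ → ℝ := fun n => (x * t) ^ n / n ! with hf_def
  set g : ℕ → ℝ := fun l => if Even l then (-(t ^ 2) / 2) ^ (l / 2) / (l / 2)! else 0 with hg_def
  have hf : HasSum f (Real.exp (x * t)) := by
    rw [Real.exp_eq_exp_ℝ]; exact NormedSpace.expSeries_div_hasSum_exp (x * t)
  have hg0 : HasSum (fun j : ℕ => (-(t ^ 2) / 2) ^ j / j !) (Real.exp (-(t ^ 2) / 2)) := by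
    rw [Real.exp_eq_exp_ℝ]; exact NormedSpace.expSeries_div_hasSum_exp (𝔸 := ℝ) _
  have hinj : Function.Injective (fun j : ℕ => 2 * j) := by
    intro a b h
    simp only at h
    omega
  have hzero : ∀ l, l ∉ Set.range (fun j : ℕ => 2 * j) → g l = 0 := by
    intro l hl
    have hne : ¬ Even l := by
      rintro ⟨m, hm⟩
      exact hl ⟨m, show 2 * m = l by omega⟩
    simp [hg_def, hne]
  have hcomp : ∀ j : ℕ, g (2 * j) = (-(t ^ 2) / 2) ^ j / j ! := by
    intro j
    simp [hg_def, even_two_mul j, Nat.mul_div_cancel_left j two_pos]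
  have hg : HasSum g (Real.exp (-(t ^ 2) / 2)) := by
    apply (Function.Injective.hasSum_iff hinj hzero).mp
    have hcg : (g ∘ fun j : ℕ => 2 * j) = fun j : ℕ => (-(t ^ 2) / 2) ^ j / j ! :=
      funext fun j => by rw [Function.comp_apply, hcomp]
    rw [hcg]
    exact hg0
  have hf_norm : Summable fun n => ‖f n‖ := by
    refine (Real.summable_pow_div_factorial |x * t|).congr fun n => ?_
    simp [hf_def, Real.norm_eq_abs, abs_div, abs_pow, abs_mul, Nat.abs_cast]
  have hg_norm : Summable fun l => ‖g l‖ := by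
    refine (Function.Injective.summable_iff hinj ?_).mp ?_
    · intro l hl; rw [hzero l hl, norm_zero]
    · have hcg : ((fun l => ‖g l‖) ∘ fun j : ℕ => 2 * j)
          = fun j : ℕ => ‖(-(t ^ 2) / 2) ^ j / (j.factorial : ℝ)‖ :=
        funext fun j => by rw [Function.comp_apply, hcomp]
      rw [hcg]
      refine (Real.summable_pow_div_factorial |(-(t ^ 2) / 2)|).congr fun j => ?_
      simp [Real.norm_eq_abs, abs_div, abs_pow, abs_mul, Nat.abs_cast]
  have hC : Summable fun n => ∑ kl ∈ Finset.HasAntidiagonal.antidiagonal n, f kl.1 * g kl.2 :=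
    (summable_norm_sum_mul_antidiagonal_of_summable_norm hf_norm hg_norm).of_norm
  have hprod := tsum_mul_tsum_eq_tsum_sum_antidiagonal_of_summable_norm hf_norm hg_norm
  have hsum : HasSum (fun n => ∑ kl ∈ Finset.HasAntidiagonal.antidiagonal n, f kl.1 * g kl.2)
      (Real.exp (x * t - t ^ 2 / 2)) := by
    have h := hC.hasSum
    rw [← hprod, hf.tsum_eq, hg.tsum_eq, ← Real.exp_add] at h
    convert h using 2
    ring
  have key : ∀ n : ℕ, (Polynomial.aeval x (Polynomial.hermite n) : ℝ) * t ^ n / n !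
      = ∑ kl ∈ Finset.HasAntidiagonal.antidiagonal n, f kl.1 * g kl.2 := by
    intro n
    rw [Finset.Nat.sum_antidiagonal_eq_sum_range_succ (fun k l => f k * g l) n]
    have hev : (Polynomial.aeval x (Polynomial.hermite n) : ℝ)
        = ∑ k ∈ Finset.range (n + 1), ((Polynomial.hermite n).coeff k : ℝ) * x ^ k := by
      rw [Polynomial.aeval_def, ← Polynomial.eval_map]
      have hdeg : ((Polynomial.hermite n).map (algebraMap ℤ ℝ)).natDegree < n + 1 :=
        Nat.lt_succ_of_le (le_trans Polynomial.natDegree_map_le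
          (Polynomial.natDegree_hermite (n := n)).le)
      rw [Polynomial.eval_eq_sum_range' hdeg]
      simp [Polynomial.coeff_map]
    rw [hev, Finset.sum_mul, Finset.sum_div]
    refine Finset.sum_congr rfl fun k hk => ?_
    have hkn : k ≤ n := Nat.lt_succ_iff.mp (Finset.mem_range.mp hk)
    by_cases hpar : Even (n + k)
    · have hnkev : Even (n - k) := by
        rw [Nat.even_sub hkn]; rw [Nat.even_add] at hpar; exact hpar
      obtain ⟨j, hj⟩ := hnkev
      have hn : n = 2 * j + k := by omega
      subst hn
      have hnk : 2 * j + k - k = 2 * j := by omega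
      rw [hnk, hcomp, Polynomial.coeff_hermite_explicit j k, hf_def]
      exact term_key x t j k
    · have h1 : (Polynomial.hermite n).coeff k = 0 :=
        Polynomial.coeff_hermite_of_odd_add (Nat.not_even_iff_odd.mp hpar)
      have h2 : ¬ Even (n - k) := by
        rw [Nat.even_sub hkn]; rw [Nat.even_add] at hpar; exact hpar
      simp [h1, hg_def, h2]
  rw [show (fun n : ℕ => (Polynomial.aeval x (Polynomial.hermite n) : ℝ) * t ^ n / n.factorial)
      = (fun n => ∑ kl ∈ Finset.HasAntidiagonal.antidiagonal n, f kl.1 * g kl.2) from funext key]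
  exact hsum
end
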